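/- Let Y be a finite set, P : Y × Y → [0,1] with P(y,y') + P(y',y) = 1, τ > 0, π_ref a fully supported distribution on Y, and define J(π₁,π₂) = ∑_{y,y'} π₁(y)π₂(y')P(y,y') − τ·KL(π₁‖π_ref) + τ·KL(π₂‖π_ref) over fully supported distributions. If π* satisfies J(π*,π) ≥ J(π',π) for all π' and all π (i.e., π* is a max-player Nash policy with itself as opponent), then for any distribution π with support contained in supp(π_ref), J(π*, π) ≥ 1/2. -/
import Mathlib


open Finset

/-- KL divergence between two distributions on a finite set. -/
noncomputable def KL {Y : Type*} [Fintype Y] (p q : Y → ℝ) : ℝ :=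
  ∑ y, p y * Real.log (p y / q y)

/-- The KL-regularized two-player game objective. -/
noncomputable def gameJ {Y : Type*} [Fintype Y]
    (P : Y → Y → ℝ) (τ : ℝ) (πref p1 p2 : Y → ℝ) : ℝ :=
  (∑ y, ∑ y', p1 y * p2 y' * P y y') - τ * KL p1 πref + τ * KL p2 πref

lemma cont_xlog (q : ℝ) (hq : q ≠ 0) :
    Continuous (fun x : ℝ => x * Real.log (x / q)) := by
  have h : (fun x : ℝ => x * Real.log (x / q))
      = fun x => x * Real.log x - Real.log q * x := by
    funext x
    by_cases hx : x = 0
    · simp [hx]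
    · rw [Real.log_div hx hq]; ring
  rw [h]
  exact Real.continuous_mul_log.sub (continuous_const.mul continuous_id)

theorem nash_policy_half_win_rate {Y : Type*} [Fintype Y]
    (P : Y → Y → ℝ)
    (hP01 : ∀ y y' : Y, 0 ≤ P y y' ∧ P y y' ≤ 1)
    (hPcomp : ∀ y y' : Y, P y y' + P y' y = 1)
    (τ : ℝ) (hτ : 0 < τ)
    (πref : Y → ℝ) (href0 : ∀ y, 0 < πref y) (href1 : ∑ y, πref y = 1)
    (πstar : Y → ℝ) (hstar0 : ∀ y, 0 < πstar y) (hstar1 : ∑ y, πstar y = 1)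
    (hNash : ∀ π' π : Y → ℝ, (∀ y, 0 < π' y) → (∑ y, π' y = 1) →
      (∀ y, 0 < π y) → (∑ y, π y = 1) →
      gameJ P τ πref π' π ≤ gameJ P τ πref πstar π) :
    ∀ π : Y → ℝ, (∀ y, 0 ≤ π y) → (∑ y, π y = 1) →
      1 / 2 ≤ gameJ P τ πref πstar π := by
  intro π hπ0 hπ1
  -- antisymmetry: J(p,q) + J(q,p) = 1
  have hSsum : ∀ p q : Y → ℝ, (∑ y, p y = 1) → (∑ y, q y = 1) →
      gameJ P τ πref p q + gameJ P τ πref q p = 1 := by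
    intro p q hp hq
    unfold gameJ
    have hswap : (∑ y, ∑ y', q y * p y' * P y y')
        = ∑ y, ∑ y', q y' * p y * P y' y := Finset.sum_comm
    have hcomb : (∑ y, ∑ y', p y * q y' * P y y')
        + (∑ y, ∑ y', q y' * p y * P y' y) = ∑ y, ∑ y', p y * q y' := by
      rw [← Finset.sum_add_distrib]
      refine Finset.sum_congr rfl fun y _ => ?_
      rw [← Finset.sum_add_distrib]
      refine Finset.sum_congr rfl fun y' _ => ?_
      linear_combination (p y * q y') * hPcomp y y'
    have htot : (∑ y : Y, ∑ y' : Y, p y * q y') = 1 := by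
      simp [← Finset.mul_sum, hq, hp]
    linarith [hswap, hcomb, htot]
  have hJhalf : gameJ P τ πref πstar πstar = 1 / 2 := by
    have := hSsum πstar πstar hstar1 hstar1; linarith
  -- for fully supported π
  have key : ∀ p : Y → ℝ, (∀ y, 0 < p y) → (∑ y, p y = 1) →
      1 / 2 ≤ gameJ P τ πref πstar p := by
    intro p hp0 hp1
    have h1 := hNash p πstar hp0 hp1 hstar0 hstar1
    have h2 := hSsum πstar p hstar1 hp1
    linarith
  -- limit argument
  set f : ℝ → Y → ℝ := fun ε y => (1 - ε) * π y + ε * πref y with hf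
  have hg : Continuous (fun ε => gameJ P τ πref πstar (f ε)) := by
    unfold gameJ KL
    apply Continuous.add
    · apply Continuous.sub
      · apply continuous_finset_sum
        intro y _
        apply continuous_finset_sum
        intro y' _
        apply Continuous.mul _ continuous_const
        apply Continuous.mul continuous_const
        exact ((continuous_const.sub continuous_id).mul continuous_const).add
          (continuous_id.mul continuous_const)
      · exact continuous_const
    · apply Continuous.mul continuous_const
      apply continuous_finset_sum
      intro y _
      exact (cont_xlog (πref y) (href0 y).ne').comp
        (((continuous_const.sub continuous_id).mul continuous_const).add
          (continuous_id.mul continuous_const))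
  have hf0 : f 0 = π := by funext y; simp [hf]
  have htend : Filter.Tendsto (fun ε => gameJ P τ πref πstar (f ε))
      (nhdsWithin 0 (Set.Ioi 0)) (nhds (gameJ P τ πref πstar π)) := by
    have h := (hg.tendsto 0).mono_left (nhdsWithin_le_nhds (s := Set.Ioi (0:ℝ)))
    rwa [hf0] at h
  have hev : ∀ᶠ ε in nhdsWithin (0:ℝ) (Set.Ioi 0),
      1 / 2 ≤ gameJ P τ πref πstar (f ε) := by
    have hmem : Set.Ioo (0:ℝ) 1 ∈ nhdsWithin (0:ℝ) (Set.Ioi 0) :=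
      Ioo_mem_nhdsGT_of_mem ⟨le_refl _, one_pos⟩
    filter_upwards [hmem] with ε hε
    refine key (f ε) (fun y => ?_) ?_
    · have h1 : 0 ≤ (1 - ε) * π y :=
        mul_nonneg (by linarith [hε.2]) (hπ0 y)
      have h2 : 0 < ε * πref y := mul_pos hε.1 (href0 y)
      simp only [hf]; linarith
    · simp only [hf]
      rw [Finset.sum_add_distrib, ← Finset.mul_sum, ← Finset.mul_sum, hπ1, href1]
      ring
  exact ge_of_tendsto htend hev
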